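/- Fix a positive integer $p$, complex numbers $b_1,\dots,b_p$, and positive real weights $\omega_1,\dots,\omega_p$. Define $f_\ell(T_1,\dots,T_p) = \sum_{j=1}^p \omega_j T_j^\ell - b_\ell$ for $\ell = 1,\dots,p$. Then the affine variety $\mathcal{V} = \{T \in \mathbb{C}^p : f_1(T) = \cdots = f_p(T) = 0\}$ is finite. -/

import Mathlib

noncomputable section

open MvPolynomial

/-- Extracting the homogeneous component of a product with a homogeneous polynomial. -/
lemma aux_hc {σ : Type*} {R : Type*} [CommSemiring R] (h ψ : MvPolynomial σ R) {d N : ℕ}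
    (hdN : d ≤ N) (hψ : ψ.IsHomogeneous d) :
    homogeneousComponent N (h * ψ) = homogeneousComponent (N - d) h * ψ := by
  conv_lhs => rw [← sum_homogeneousComponent h]
  rw [Finset.sum_mul, map_sum]
  have hterm : ∀ k : ℕ, homogeneousComponent N (homogeneousComponent k h * ψ)
      = if k = N - d then homogeneousComponent k h * ψ else 0 := by
    intro k
    rw [homogeneousComponent_of_mem
      ((mem_homogeneousSubmodule _ _).mpr ((homogeneousComponent_isHomogeneous k h).mul hψ))]
    congr 1
    simp only [eq_iff_iff]
    omega
  simp_rw [hterm]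
  rw [Finset.sum_ite_eq' (Finset.range (h.totalDegree + 1)) (N - d)
    (fun k => homogeneousComponent k h * ψ)]
  split_ifs with hmem
  · rfl
  · rw [Finset.mem_range, not_lt] at hmem
    rw [homogeneousComponent_eq_zero _ _ (by omega), zero_mul]

/-- The homogeneous weighted power sum system with positive weights has only the trivial
common zero. -/
lemma aux_zero (p : ℕ) (ω : Fin p → ℝ) (hω : ∀ j, 0 < ω j) (T : Fin p → ℂ)
    (hT : ∀ ℓ : Fin p, ∑ j, (ω j : ℂ) * T j ^ ((ℓ : ℕ) + 1) = 0) : T = 0 := by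
  classical
  by_contra hne
  have hex : ∃ j, T j ≠ 0 := by
    by_contra h
    push_neg at h
    exact hne (funext fun j => h j)
  obtain ⟨j0, hj0⟩ := hex
  set z0 : ℂ := T j0 with hz0
  set s' : Finset ℂ := ((Finset.univ.image T).erase 0).erase z0 with hs'
  set Q : Polynomial ℂ := Polynomial.X * ∏ z ∈ s', (Polynomial.X - Polynomial.C z) with hQ
  have hmonic : (∏ z ∈ s', (Polynomial.X - Polynomial.C z)).Monic :=
    Polynomial.monic_prod_of_monic _ _ fun z _ => Polynomial.monic_X_sub_C z
  have hQdeg : Q.natDegree ≤ p := by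
    rw [hQ, Polynomial.natDegree_mul Polynomial.X_ne_zero hmonic.ne_zero,
      Polynomial.natDegree_X, Polynomial.natDegree_prod _ _
        (fun z _ => (Polynomial.monic_X_sub_C z).ne_zero)]
    simp only [Polynomial.natDegree_X_sub_C, Finset.sum_const, smul_eq_mul, mul_one]
    have h1 : s' ⊆ (Finset.univ.image T).erase z0 := by
      intro x hx
      rw [hs', Finset.mem_erase, Finset.mem_erase] at hx
      exact Finset.mem_erase.mpr ⟨hx.1, hx.2.2⟩
    have h2 : z0 ∈ Finset.univ.image T := Finset.mem_image.mpr ⟨j0, Finset.mem_univ _, rfl⟩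
    have h3 : s'.card ≤ (Finset.univ.image T).card - 1 := by
      calc s'.card ≤ ((Finset.univ.image T).erase z0).card := Finset.card_le_card h1
        _ = (Finset.univ.image T).card - 1 := Finset.card_erase_of_mem h2
    have h4 : (Finset.univ.image T).card ≤ p := by
      calc (Finset.univ.image T).card ≤ Finset.univ.card := Finset.card_image_le
        _ = p := by simp
    have h5 : 1 ≤ (Finset.univ.image T).card := Finset.card_pos.mpr ⟨z0, h2⟩
    omega
  have hQ0 : Q.coeff 0 = 0 := by
    rw [Polynomial.coeff_zero_eq_eval_zero, hQ, Polynomial.eval_mul, Polynomial.eval_X, zero_mul]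
  have hQz : ∀ j, T j ≠ z0 → Q.eval (T j) = 0 := by
    intro j hj
    rw [hQ, Polynomial.eval_mul]
    by_cases h0 : T j = 0
    · rw [Polynomial.eval_X, h0, zero_mul]
    · have hmem : T j ∈ s' := by
        rw [hs']
        exact Finset.mem_erase.mpr ⟨hj, Finset.mem_erase.mpr ⟨h0,
          Finset.mem_image.mpr ⟨j, Finset.mem_univ _, rfl⟩⟩⟩
      rw [Polynomial.eval_prod]
      rw [Finset.prod_eq_zero hmem (by simp)]
      ring
  have key : ∑ j, (ω j : ℂ) * Q.eval (T j) = 0 := by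
    have hev : ∀ j, Q.eval (T j) = ∑ ℓ ∈ Finset.range (p + 1), Q.coeff ℓ * T j ^ ℓ :=
      fun j => Polynomial.eval_eq_sum_range' (by omega) _
    calc ∑ j, (ω j : ℂ) * Q.eval (T j)
        = ∑ j, ∑ ℓ ∈ Finset.range (p + 1), Q.coeff ℓ * ((ω j : ℂ) * T j ^ ℓ) := by
          refine Finset.sum_congr rfl fun j _ => ?_
          rw [hev j, Finset.mul_sum]
          exact Finset.sum_congr rfl fun ℓ _ => by ring
      _ = ∑ ℓ ∈ Finset.range (p + 1), Q.coeff ℓ * ∑ j, (ω j : ℂ) * T j ^ ℓ := by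
          rw [Finset.sum_comm]
          exact Finset.sum_congr rfl fun ℓ _ => by rw [Finset.mul_sum]
      _ = 0 := by
          refine Finset.sum_eq_zero fun ℓ hℓ => ?_
          match ℓ, hℓ with
          | 0, _ => rw [hQ0, zero_mul]
          | (m + 1), hℓ =>
            rw [Finset.mem_range] at hℓ
            rw [hT ⟨m, by omega⟩, mul_zero]
  have hsplit : ∑ j, (ω j : ℂ) * Q.eval (T j)
      = (∑ j ∈ Finset.univ.filter (fun j => T j = z0), (ω j : ℂ)) * Q.eval z0 := by
    rw [← Finset.sum_filter_add_sum_filter_not Finset.univ (fun j => T j = z0)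
      (fun j => (ω j : ℂ) * Q.eval (T j))]
    have h2 : ∑ j ∈ Finset.univ.filter (fun j => ¬ T j = z0), (ω j : ℂ) * Q.eval (T j) = 0 :=
      Finset.sum_eq_zero fun j hj => by rw [hQz j (Finset.mem_filter.mp hj).2, mul_zero]
    rw [h2, add_zero, Finset.sum_mul]
    exact Finset.sum_congr rfl fun j hj => by rw [(Finset.mem_filter.mp hj).2]
  have hQz0 : Q.eval z0 ≠ 0 := by
    rw [hQ, Polynomial.eval_mul, Polynomial.eval_X, Polynomial.eval_prod]
    refine mul_ne_zero hj0 (Finset.prod_ne_zero_iff.mpr fun z hz => ?_)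
    simp only [Polynomial.eval_sub, Polynomial.eval_X, Polynomial.eval_C, sub_ne_zero]
    intro h
    rw [← h] at hz
    exact (Finset.mem_erase.mp hz).1 rfl
  have hsum : (∑ j ∈ Finset.univ.filter (fun j => T j = z0), (ω j : ℂ)) ≠ 0 := by
    have hcast : (∑ j ∈ Finset.univ.filter (fun j => T j = z0), (ω j : ℂ))
        = ((∑ j ∈ Finset.univ.filter (fun j => T j = z0), ω j : ℝ) : ℂ) := by push_cast; rfl
    rw [hcast, Complex.ofReal_ne_zero]
    exact ne_of_gt (Finset.sum_pos (fun j _ => hω j)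
      ⟨j0, Finset.mem_filter.mpr ⟨Finset.mem_univ _, rfl⟩⟩)
  rw [hsplit] at key
  exact (mul_ne_zero hsum hQz0) key

/-- The affine variety cut out by the weighted power-sum equations
`∑ⱼ ωⱼ Tⱼ^ℓ = b_ℓ`, `ℓ = 1,…,p`, with positive real weights, is finite. -/
theorem weighted_power_sum_variety_finite (p : ℕ) (hp : 1 ≤ p)
    (b : Fin p → ℂ) (ω : Fin p → ℝ) (hω : ∀ j, 0 < ω j) :
    {T : Fin p → ℂ |
        ∀ ℓ : Fin p, ∑ j, (ω j : ℂ) * T j ^ ((ℓ : ℕ) + 1) = b ℓ}.Finite := by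
  classical
  set g : Fin p → MvPolynomial (Fin p) ℂ :=
    fun ℓ => ∑ j, MvPolynomial.C (ω j : ℂ) * MvPolynomial.X j ^ ((ℓ : ℕ) + 1) with hgdef
  have hg_hom : ∀ ℓ : Fin p, (g ℓ).IsHomogeneous ((ℓ : ℕ) + 1) :=
    fun ℓ => IsHomogeneous.sum _ _ _ fun j _ => isHomogeneous_C_mul_X_pow _ _ _
  have hg_eval : ∀ (T : Fin p → ℂ) (ℓ : Fin p),
      MvPolynomial.eval T (g ℓ) = ∑ j, (ω j : ℂ) * T j ^ ((ℓ : ℕ) + 1) := by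
    intro T ℓ
    simp [hgdef]
  set J : Ideal (MvPolynomial (Fin p) ℂ) := Ideal.span (Set.range g) with hJ
  have hXrad : ∀ i : Fin p, ∃ m : ℕ, (X i : MvPolynomial (Fin p) ℂ) ^ m ∈ J := by
    intro i
    rw [← Ideal.mem_radical_iff, ← vanishingIdeal_zeroLocus_eq_radical (K := ℂ)]
    intro T hT
    have hT0 : T = 0 := aux_zero p ω hω T (fun ℓ => by
      rw [← hg_eval]; exact hT (g ℓ) (Ideal.subset_span ⟨ℓ, rfl⟩))
    rw [hT0]
    simp
  choose n hn using hXrad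
  set N : ℕ := (∑ i, n i) + p + 1 with hN
  have hXN : ∀ i, (X i : MvPolynomial (Fin p) ℂ) ^ N ∈ J := by
    intro i
    have hni : n i ≤ N := by
      have h1 : n i ≤ ∑ i, n i :=
        Finset.single_le_sum (f := n) (fun _ _ => Nat.zero_le _) (Finset.mem_univ i)
      omega
    have hsplit : (X i : MvPolynomial (Fin p) ℂ) ^ N = X i ^ (N - n i) * X i ^ n i := by
      rw [← pow_add]
      congr 1
      omega
    rw [hsplit]
    exact Ideal.mul_mem_left _ _ (hn i)
  set f : Fin p → MvPolynomial (Fin p) ℂ := fun ℓ => g ℓ - C (b ℓ) with hf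
  set I : Ideal (MvPolynomial (Fin p) ℂ) := Ideal.span (Set.range f) with hI
  -- Step C: monic-type reduction relations
  have hrep : ∀ i : Fin p, ∃ r : MvPolynomial (Fin p) ℂ,
      r.totalDegree < N ∧ ((X i : MvPolynomial (Fin p) ℂ) ^ N - r) ∈ I := by
    intro i
    obtain ⟨c, hc⟩ := Ideal.mem_span_range_iff_exists_fun.mp (hXN i)
    set c' : Fin p → MvPolynomial (Fin p) ℂ :=
      fun ℓ => homogeneousComponent (N - ((ℓ : ℕ) + 1)) (c ℓ) with hc'def
    have hXrepr : (X i : MvPolynomial (Fin p) ℂ) ^ N = ∑ ℓ, c' ℓ * g ℓ := by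
      have hcongr := congrArg (homogeneousComponent N) hc
      rw [map_sum] at hcongr
      have hXh : homogeneousComponent N ((X i : MvPolynomial (Fin p) ℂ) ^ N)
          = X i ^ N := by
        rw [homogeneousComponent_of_mem
          ((mem_homogeneousSubmodule _ _).mpr (isHomogeneous_X_pow i N))]
        simp
      rw [hXh] at hcongr
      rw [← hcongr]
      refine Finset.sum_congr rfl fun ℓ _ => ?_
      exact aux_hc (c ℓ) (g ℓ) (by have := ℓ.2; omega) (hg_hom ℓ)
    refine ⟨∑ ℓ, c' ℓ * C (b ℓ), ?_, ?_⟩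
    · refine lt_of_le_of_lt (totalDegree_finset_sum _ _) ?_
      rw [Finset.sup_lt_iff (Nat.pos_of_ne_zero (by omega) : (⊥ : ℕ) < N)]
      intro ℓ _
      have h1 : (c' ℓ * C (b ℓ)).totalDegree ≤ (c' ℓ).totalDegree + (C (b ℓ)).totalDegree :=
        totalDegree_mul _ _
      have h2 : (c' ℓ).totalDegree ≤ N - ((ℓ : ℕ) + 1) :=
        (homogeneousComponent_isHomogeneous _ _).totalDegree_le
      rw [totalDegree_C] at h1
      omega
    · have heq : (X i : MvPolynomial (Fin p) ℂ) ^ N - ∑ ℓ, c' ℓ * C (b ℓ)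
          = ∑ ℓ, c' ℓ * f ℓ := by
        rw [hXrepr, ← Finset.sum_sub_distrib]
        refine Finset.sum_congr rfl fun ℓ _ => ?_
        rw [hf]
        ring
      rw [heq]
      exact Submodule.sum_mem _ fun ℓ _ =>
        Ideal.mul_mem_left _ _ (Ideal.subset_span ⟨ℓ, rfl⟩)
  -- Step E: every polynomial is congruent mod I to one of total degree ≤ D
  set D : ℕ := p * N with hD
  have hspan : ∀ q : MvPolynomial (Fin p) ℂ,
      ∃ w : MvPolynomial (Fin p) ℂ, w.totalDegree ≤ D ∧ q - w ∈ I := by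
    suffices h : ∀ d, ∀ q : MvPolynomial (Fin p) ℂ, q.totalDegree ≤ d →
        ∃ w : MvPolynomial (Fin p) ℂ, w.totalDegree ≤ D ∧ q - w ∈ I by
      intro q
      exact h q.totalDegree q le_rfl
    intro d
    induction d using Nat.strong_induction_on with
    | _ d IH =>
      intro q hq
      by_cases hqD : q.totalDegree ≤ D
      · exact ⟨q, hqD, by rw [sub_self]; exact I.zero_mem⟩
      · rw [← support_sum_monomial_coeff q]
        refine Finset.sum_induction _ (fun x => ∃ w, w.totalDegree ≤ D ∧ x - w ∈ I) ?_ ?_ ?_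
        · rintro x y ⟨wx, hwx, hx⟩ ⟨wy, hwy, hy⟩
          refine ⟨wx + wy, le_trans (totalDegree_add _ _) (by simp [hwx, hwy]), ?_⟩
          have : x + y - (wx + wy) = (x - wx) + (y - wy) := by ring
          rw [this]
          exact Submodule.add_mem _ hx hy
        · exact ⟨0, by simp, by simpa using I.zero_mem⟩
        · intro s hs
          by_cases hc0 : coeff s q = 0
          · rw [hc0, map_zero]
            exact ⟨0, by simp, by simpa using I.zero_mem⟩
          have hdeg_s : (s.sum fun _ e => e) ≤ d := le_trans (le_totalDegree hs) hq
          by_cases hsD : (s.sum fun _ e => e) ≤ D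
          · exact ⟨monomial s (coeff s q),
              by rw [totalDegree_monomial _ hc0]; exact hsD,
              by rw [sub_self]; exact I.zero_mem⟩
          · push_neg at hsD
            have hssum : (s.sum fun _ e => e) = ∑ i, s i :=
              Finsupp.sum_fintype _ _ fun _ => rfl
            have hex : ∃ i, N ≤ s i := by
              by_contra hno
              push_neg at hno
              have hb : ∑ i, s i ≤ p * N := by
                calc ∑ i, s i ≤ Finset.univ.card • N :=
                    Finset.sum_le_card_nsmul _ _ _ fun i _ => le_of_lt (hno i)
                  _ = p * N := by simp [mul_comm]
              rw [hssum] at hsD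
              omega
            obtain ⟨i, hi⟩ := hex
            obtain ⟨r, hrdeg, hrI⟩ := hrep i
            set s₁ : Fin p →₀ ℕ := s - Finsupp.single i N with hs₁
            have hs₁add : s₁ + Finsupp.single i N = s := by
              ext j
              rw [Finsupp.add_apply, hs₁, Finsupp.tsub_apply, Finsupp.single_apply]
              rcases eq_or_ne i j with rfl | hj
              · rw [if_pos rfl]
                omega
              · rw [if_neg hj]
                omega
            have hmono : (monomial s) (coeff s q)
                = (monomial s₁) (coeff s q) * ((X i : MvPolynomial (Fin p) ℂ) ^ N) := by
              rw [X_pow_eq_monomial, monomial_mul, hs₁add, mul_one]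
            have hs₁sum : (s₁.sum fun _ e => e) + N = (s.sum fun _ e => e) := by
              conv_rhs => rw [← hs₁add]
              rw [Finsupp.sum_add_index' (fun _ => rfl) (fun _ _ _ => rfl)]
              rw [Finsupp.sum_single_index rfl]
            have hterm2 : ((monomial s₁) (coeff s q) * r).totalDegree ≤ d - 1 := by
              have h1 : ((monomial s₁) (coeff s q) * r).totalDegree
                  ≤ ((monomial s₁) (coeff s q)).totalDegree + r.totalDegree :=
                totalDegree_mul _ _
              rw [totalDegree_monomial _ hc0] at h1
              omega
            obtain ⟨w, hw, hwI⟩ := IH (d - 1) (by omega) _ hterm2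
            refine ⟨w, hw, ?_⟩
            have heq2 : (monomial s) (coeff s q) - w
                = (monomial s₁) (coeff s q) * ((X i : MvPolynomial (Fin p) ℂ) ^ N - r)
                  + ((monomial s₁) (coeff s q) * r - w) := by
              rw [hmono]
              ring
            rw [heq2]
            exact Submodule.add_mem _ (Ideal.mul_mem_left _ _ hrI) hwI
  -- Step F: linear independence of evaluation functionals
  set S : Set (Fin p → ℂ) :=
    {T : Fin p → ℂ | ∀ ℓ : Fin p, ∑ j, (ω j : ℂ) * T j ^ ((ℓ : ℕ) + 1) = b ℓ} with hS
  have hker : ∀ T ∈ S, ∀ q ∈ I, MvPolynomial.eval T q = 0 := by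
    intro T hT q hq
    have hle : I ≤ RingHom.ker (MvPolynomial.eval T) := by
      rw [hI, Ideal.span_le]
      rintro _ ⟨ℓ, rfl⟩
      rw [SetLike.mem_coe, RingHom.mem_ker, hf]
      simp only [map_sub, eval_C]
      rw [hg_eval T ℓ, hT ℓ, sub_self]
    exact RingHom.mem_ker.mp (hle hq)
  set W : Submodule ℂ (MvPolynomial (Fin p) ℂ) := restrictTotalDegree (Fin p) ℂ D with hW
  set φ : S → (W →ₗ[ℂ] ℂ) := fun T =>
    { toFun := fun w => MvPolynomial.eval T.1 w.1
      map_add' := fun w₁ w₂ => by simp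
      map_smul' := fun c w => by
        simp [smul_eq_C_mul] } with hφ
  have hli : LinearIndependent ℂ φ := by
    rw [linearIndependent_iff']
    intro t a hsum t0 ht0
    -- separating polynomial
    have hsep : ∀ t' : S, t' ≠ t0 → ∃ j, t'.1 j ≠ t0.1 j := by
      intro t' ht'
      by_contra h
      push_neg at h
      exact ht' (Subtype.ext (funext h))
    set c : S → Fin p := fun t' =>
      if h : ∃ j, t'.1 j ≠ t0.1 j then h.choose else ⟨0, hp⟩ with hcdef
    have hc_spec : ∀ t' : S, t' ≠ t0 → t'.1 (c t') ≠ t0.1 (c t') := by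
      intro t' ht'
      have h := hsep t' ht'
      simp only [hcdef, dif_pos h]
      exact h.choose_spec
    set q0 : MvPolynomial (Fin p) ℂ :=
      ∏ t' ∈ t.erase t0, (X (c t') - C (t'.1 (c t'))) with hq0
    have hq0_t0 : MvPolynomial.eval t0.1 q0 ≠ 0 := by
      rw [hq0, MvPolynomial.eval_prod]
      refine Finset.prod_ne_zero_iff.mpr fun t' ht' => ?_
      simp only [map_sub, eval_X, eval_C, sub_ne_zero]
      exact fun h => hc_spec t' (Finset.ne_of_mem_erase ht') h.symm
    have hq0_z : ∀ t'' : S, t'' ∈ t.erase t0 → MvPolynomial.eval t''.1 q0 = 0 := by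
      intro t'' ht''
      rw [hq0, MvPolynomial.eval_prod]
      refine Finset.prod_eq_zero ht'' ?_
      simp
    obtain ⟨w, hwD, hwI⟩ := hspan q0
    have hwmem : w ∈ W := by
      rw [hW, mem_restrictTotalDegree]
      exact hwD
    have happ := congrArg (fun (ψ : W →ₗ[ℂ] ℂ) => ψ ⟨w, hwmem⟩) hsum
    simp only [LinearMap.coe_sum, Finset.sum_apply, LinearMap.smul_apply,
      LinearMap.zero_apply, smul_eq_mul] at happ
    have heval : ∀ t' : S, MvPolynomial.eval t'.1 w = MvPolynomial.eval t'.1 q0 := by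
      intro t'
      have h0 : MvPolynomial.eval t'.1 (q0 - w) = 0 := hker t'.1 t'.2 _ hwI
      rw [map_sub, sub_eq_zero] at h0
      exact h0.symm
    have happ2 : ∑ t' ∈ t, a t' * MvPolynomial.eval t'.1 q0 = 0 := by
      rw [← happ]
      refine Finset.sum_congr rfl fun t' _ => ?_
      simp only [hφ, LinearMap.coe_mk, AddHom.coe_mk]
      rw [heval t']
    rw [← Finset.add_sum_erase _ _ ht0] at happ2
    rw [Finset.sum_eq_zero (fun t'' ht'' => by rw [hq0_z t'' ht'', mul_zero]), add_zero]
      at happ2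
    exact (mul_eq_zero.mp happ2).resolve_right hq0_t0
  have hfin : Finite S := hli.finite
  exact Set.finite_coe_iff.mp hfin
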